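/- arXiv:1701.05841 — 5 statements merged into one kernel-verified Lean document; each statement's English description precedes it below -/
import Mathlib

section
/- Let K be a field of characteristic zero, let Δ be a set of derivations K → K closed under K-linear combinations, and define cl(C) = ⋂{ker ∂ : ∂ ∈ Δ, ∂ vanishes on C} for C ⊆ K. Then cl satisfies the exchange principle: if a ∈ cl(C ∪ {b}) and a ∉ cl(C), then b ∈ cl(C ∪ {a}). -/
/-- A derivation from a field `K` to itself: additive and Leibniz. -/
def IsDerivation {K : Type*} [Field K] (d : K → K) : Prop :=
  (∀ a b : K, d (a + b) = d a + d b) ∧ (∀ a b : K, d (a * b) = a * d b + b * d a)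

/-- The closure operator given by common kernels of derivations in `Δ` vanishing on `C`. -/
def derCl {K : Type*} [Field K] (Δ : Set (K → K)) (C : Set K) : Set K :=
  {a : K | ∀ d ∈ Δ, (∀ c ∈ C, d c = 0) → d a = 0}

theorem stmt1 {K : Type*} [Field K] [CharZero K] (Δ : Set (K → K))
    (hΔ : ∀ d ∈ Δ, IsDerivation d)
    (hlin : ∀ d₁ ∈ Δ, ∀ d₂ ∈ Δ, ∀ c₁ c₂ : K,
      (fun t => c₁ * d₁ t + c₂ * d₂ t) ∈ Δ)
    (C : Set K) (a b : K)
    (ha : a ∈ derCl Δ (C ∪ {b})) (ha' : a ∉ derCl Δ C) :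
    b ∈ derCl Δ (C ∪ {a}) := by
  simp only [derCl, Set.mem_setOf_eq, not_forall] at *
  obtain ⟨d₀, hd₀, hd₀C, hd₀a⟩ := ha'
  intro d hd hdCa
  by_contra hdb
  have hda : d a = 0 := hdCa a (Set.mem_union_right _ rfl)
  set e := fun t => 1 * d₀ t + (-(d₀ b / d b)) * d t with he_def
  have he : e ∈ Δ := hlin d₀ hd₀ d hd 1 (-(d₀ b / d b))
  have heC : ∀ c ∈ C ∪ {b}, e c = 0 := by
    rintro c (hc | rfl)
    · simp [he_def, hd₀C c hc, hdCa c (Set.mem_union_left _ hc)]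
    · simp [he_def]
      field_simp
      ring
  have hea : e a = 0 := ha e he heC
  simp [he_def, hda] at hea
  exact hd₀a hea
end

section
/- Let K be a field of characteristic zero with subfields E ⊆ L, and suppose x̄ = (x₁,…,xₙ) is a tuple from K algebraically independent over L. Let ℓ₁, ℓ₂ ∈ L \ E and let g ∈ GL₂(E(x̄)) be a non-scalar matrix with entries in E[x̄] such that ℓ₁ = g·ℓ₂ (Möbius action). Then there exists a non-scalar matrix h ∈ GL₂(E) such that ℓ₁ = h·ℓ₂. -/
open MvPolynomial

/-- A `2 × 2` matrix is scalar if it is a scalar multiple of the identity. -/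
def IsScalarMatrix {K : Type*} [Field K] (g : Matrix (Fin 2) (Fin 2) K) : Prop :=
  ∃ c : K, g = c • (1 : Matrix (Fin 2) (Fin 2) K)

theorem stmt8 {K : Type*} [Field K] [CharZero K] (E L : Subfield K) (hEL : E ≤ L)
    {n : ℕ} (x : Fin n → K) (hx : AlgebraicIndependent L x)
    (ℓ₁ ℓ₂ : K) (hℓ₁ : ℓ₁ ∈ L) (hℓ₂ : ℓ₂ ∈ L) (hℓ₁E : ℓ₁ ∉ E) (hℓ₂E : ℓ₂ ∉ E)
    (g : Matrix (Fin 2) (Fin 2) K)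
    (hgE : ∀ i j, g i j ∈ Subring.closure (↑E ∪ Set.range x))
    (hgdet : g.det ≠ 0) (hgns : ¬ IsScalarMatrix g)
    (hden : g 1 0 * ℓ₂ + g 1 1 ≠ 0)
    (hact : ℓ₁ = (g 0 0 * ℓ₂ + g 0 1) / (g 1 0 * ℓ₂ + g 1 1)) :
    ∃ h : Matrix (Fin 2) (Fin 2) K, (∀ i j, h i j ∈ E) ∧ h.det ≠ 0 ∧
      ¬ IsScalarMatrix h ∧ h 1 0 * ℓ₂ + h 1 1 ≠ 0 ∧
      ℓ₁ = (h 0 0 * ℓ₂ + h 0 1) / (h 1 0 * ℓ₂ + h 1 1) := by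
  classical
  set l₁ : L := ⟨ℓ₁, hℓ₁⟩ with hl₁
  set l₂ : L := ⟨ℓ₂, hℓ₂⟩ with hl₂
  let S : Subring (MvPolynomial (Fin n) L) :=
  { carrier := {P | ∀ m, ((P.coeff m : L) : K) ∈ E}
    zero_mem' := by intro m; simpa using E.zero_mem
    one_mem' := by
      intro m
      rw [coeff_one]
      split
      · simpa using E.one_mem
      · simpa using E.zero_mem
    add_mem' := by
      intro a b ha hb m
      rw [coeff_add]
      push_cast
      exact E.add_mem (ha m) (hb m)
    neg_mem' := by
      intro a ha m
      rw [coeff_neg]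
      push_cast
      exact E.neg_mem (ha m)
    mul_mem' := by
      intro a b ha hb m
      rw [coeff_mul]
      push_cast
      exact Subring.sum_mem _ fun p hp => E.mul_mem (ha p.1) (hb p.2) }
  have hsub : Subring.closure ((E : Set K) ∪ Set.range x) ≤
      S.map (aeval x : MvPolynomial (Fin n) L →ₐ[L] K).toRingHom := by
    rw [Subring.closure_le]
    rintro a (ha | ⟨i, rfl⟩)
    · refine ⟨C ⟨a, hEL ha⟩, fun m => ?_, by simp; rfl⟩
      rw [coeff_C]
      split
      · exact ha
      · simpa using E.zero_mem
    · refine ⟨X i, fun m => ?_, by simp⟩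
      rw [coeff_X']
      split
      · simpa using E.one_mem
      · simpa using E.zero_mem
  choose P hPS hPe using fun i j => hsub (hgE i j)
  have halg : ∀ l : L, (algebraMap L K) l = (l : K) := fun l => rfl
  have key : ℓ₁ * (g 1 0 * ℓ₂ + g 1 1) = g 0 0 * ℓ₂ + g 0 1 := (eq_div_iff hden).mp hact
  have hrel : C l₁ * (C l₂ * P 1 0 + P 1 1) - (C l₂ * P 0 0 + P 0 1) = 0 := by
    apply hx
    simp only [map_sub, map_add, map_mul, map_zero, aeval_C, halg]
    have hPe' : ∀ i j, aeval x (P i j) = g i j := hPe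
    simp only [hPe']
    show ℓ₁ * (ℓ₂ * g 1 0 + g 1 1) - (ℓ₂ * g 0 0 + g 0 1) = 0
    linear_combination key
  have hm : ∃ m : Fin n →₀ ℕ, ¬ ((P 0 1).coeff m = 0 ∧ (P 1 0).coeff m = 0 ∧
      (P 0 0).coeff m = (P 1 1).coeff m) := by
    by_contra hc
    push_neg at hc
    apply hgns
    refine ⟨g 1 1, ?_⟩
    have e01 : P 0 1 = 0 := MvPolynomial.ext _ _ fun m => by simpa using (hc m).1
    have e10 : P 1 0 = 0 := MvPolynomial.ext _ _ fun m => by simpa using (hc m).2.1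
    have e00 : P 0 0 = P 1 1 := MvPolynomial.ext _ _ fun m => (hc m).2.2
    ext i j
    fin_cases i <;> fin_cases j <;>
      simp [Matrix.smul_apply, Matrix.one_apply, ← hPe, e01, e10, e00]
  obtain ⟨m, hm⟩ := hm
  set h : Matrix (Fin 2) (Fin 2) K := Matrix.of fun i j => (((P i j).coeff m : L) : K) with hh
  have hE : ∀ i j, h i j ∈ E := fun i j => hPS i j m
  have hrelK : ℓ₁ * (ℓ₂ * h 1 0 + h 1 1) = ℓ₂ * h 0 0 + h 0 1 := by
    have := congrArg (fun p => ((p.coeff m : L) : K)) hrel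
    simp only [coeff_sub, coeff_add, coeff_C_mul, coeff_zero, mul_add] at this
    push_cast at this
    simp only [hh, Matrix.of_apply, hl₁, hl₂] at this ⊢
    linear_combination this
  have hnsh : ¬ (h 0 1 = 0 ∧ h 1 0 = 0 ∧ h 0 0 = h 1 1) := by
    rintro ⟨h1, h2, h3⟩
    apply hm
    refine ⟨Subtype.coe_injective ?_, Subtype.coe_injective ?_, Subtype.coe_injective ?_⟩
    · simpa [hh] using h1
    · simpa [hh] using h2
    · simpa [hh] using h3
  have hd : h 1 0 * ℓ₂ + h 1 1 ≠ 0 := by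
    intro hd0
    have h10 : h 1 0 = 0 := by
      by_contra h10
      apply hℓ₂E
      have : ℓ₂ = -(h 1 1) / h 1 0 := by
        rw [eq_div_iff h10]; linear_combination hd0
      rw [this]
      exact E.div_mem (E.neg_mem (hE 1 1)) (hE 1 0)
    have h11 : h 1 1 = 0 := by rwa [h10, zero_mul, zero_add] at hd0
    have hr0 : ℓ₂ * h 0 0 + h 0 1 = 0 := by
      rw [← hrelK, h10, h11]; ring
    have h00 : h 0 0 = 0 := by
      by_contra h00
      apply hℓ₂E
      have : ℓ₂ = -(h 0 1) / h 0 0 := by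
        rw [eq_div_iff h00]; linear_combination hr0
      rw [this]
      exact E.div_mem (E.neg_mem (hE 0 1)) (hE 0 0)
    have h01 : h 0 1 = 0 := by rwa [h00, mul_zero, zero_add] at hr0
    exact hnsh ⟨h01, h10, by rw [h00, h11]⟩
  have heq : ℓ₁ = (h 0 0 * ℓ₂ + h 0 1) / (h 1 0 * ℓ₂ + h 1 1) := by
    rw [eq_div_iff hd]; linear_combination hrelK
  have hdet : h.det ≠ 0 := by
    rw [Matrix.det_fin_two]
    intro hd0
    apply hℓ₁E
    by_cases h10 : h 1 0 = 0
    · have h11 : h 1 1 ≠ 0 := by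
        intro h11; apply hd; rw [h10, h11]; ring
      have h00 : h 0 0 = 0 := by
        rw [h10, mul_zero, sub_zero] at hd0
        exact (mul_eq_zero.mp hd0).resolve_right h11
      have : ℓ₁ = h 0 1 / h 1 1 := by
        rw [heq, h10, h00]; simp
      rw [this]
      exact E.div_mem (hE 0 1) (hE 1 1)
    · have : ℓ₁ = h 0 0 / h 1 0 := by
        rw [heq, div_eq_div_iff hd h10]
        linear_combination -hd0
      rw [this]
      exact E.div_mem (hE 0 0) (hE 1 0)
  have hns2 : ¬ IsScalarMatrix h := by
    rintro ⟨c, hc⟩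
    apply hnsh
    refine ⟨?_, ?_, ?_⟩ <;> simp [hc, Matrix.smul_apply, Matrix.one_apply]
  exact ⟨h, hE, hdet, hns2, hd, heq⟩
end

section
/- Let K be a field of characteristic zero with subfields E ⊆ L, let x̄ be a tuple from K algebraically independent over L, and let ℓ ∈ L \ E. If there is a non-scalar g ∈ GL₂(E(x̄)) with g·ℓ = ℓ (Möbius action), then there is a non-scalar h ∈ GL₂(E) with h·ℓ = ℓphy. -/
open MvPolynomial


/-- Any member of the subfield generated by `E` and the `x i` is a ratio of polynomial
expressions in `x` with coefficients in `E`. -/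
lemma mem_closure_ratio {K : Type*} [Field K] (E : Subfield K) {n : ℕ} (x : Fin n → K) (w : K)
    (hw : w ∈ Subfield.closure (↑E ∪ Set.range x)) :
    ∃ r s : MvPolynomial (Fin n) E, aeval x s ≠ 0 ∧ w = aeval x r / aeval x s := by
  have hset : (Set.range (algebraMap E K)) = (E : Set K) := by
    ext y; constructor
    · rintro ⟨a, rfl⟩; exact a.2
    · intro h; exact ⟨⟨y, h⟩, rfl⟩
  have hw' : w ∈ IntermediateField.adjoin E (Set.range x) := by
    rw [← IntermediateField.mem_toSubfield, IntermediateField.adjoin_toSubfield, hset]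
    exact hw
  rw [IntermediateField.mem_adjoin_range_iff] at hw'
  obtain ⟨r, s, hrs⟩ := hw'
  by_cases hs : aeval x s = 0
  · rw [hs, div_zero] at hrs
    exact ⟨0, 1, by simp, by simp [hrs]⟩
  · exact ⟨r, s, hs, hrs⟩

/-- Choice of a good parameter `s` among `0,1,2,3`. -/
lemma choose_param {K : Type*} [Field K] [CharZero K] (b d e : K) :
    ∃ s : K, (s = 0 ∨ s = 1 ∨ s = 2 ∨ s = 3) ∧ s ^ 2 + b * s + d ≠ 0 ∧ e + s ≠ 0 := by
  by_contra hcon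
  push_neg at hcon
  have hbad : ∀ s : K, (s = 0 ∨ s = 1 ∨ s = 2 ∨ s = 3) →
      (s ^ 2 + b * s + d = 0 ∨ e + s = 0) := by
    intro s hs
    by_cases hq : s ^ 2 + b * s + d = 0
    · exact Or.inl hq
    · exact Or.inr (hcon s hs hq)
  have h0 := hbad 0 (by norm_num)
  have h1 := hbad 1 (by norm_num)
  have h2 := hbad 2 (by norm_num)
  have h3 := hbad 3 (by norm_num)
  refine absurd ?_ (one_ne_zero (α := K))
  rcases h0 with h0 | h0 <;> rcases h1 with h1 | h1 <;> rcases h2 with h2 | h2 <;>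
    rcases h3 with h3 | h3 <;>
  first
    | linear_combination (h0 - h1) / ((0 : K) - 1)
    | linear_combination (h0 - h2) / ((0 : K) - 2)
    | linear_combination (h0 - h3) / ((0 : K) - 3)
    | linear_combination (h1 - h2) / ((1 : K) - 2)
    | linear_combination (h1 - h3) / ((1 : K) - 3)
    | linear_combination (h2 - h3) / ((2 : K) - 3)
    | linear_combination ((h0 - h1) / ((0 : K) - 1) - (h0 - h2) / ((0 : K) - 2)) / ((1 : K) - 2)
    | linear_combination ((h0 - h1) / ((0 : K) - 1) - (h0 - h3) / ((0 : K) - 3)) / ((1 : K) - 3)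
    | linear_combination ((h0 - h2) / ((0 : K) - 2) - (h0 - h3) / ((0 : K) - 3)) / ((2 : K) - 3)
    | linear_combination ((h1 - h2) / ((1 : K) - 2) - (h1 - h3) / ((1 : K) - 3)) / ((2 : K) - 3)

/-- Final step: build the matrix from a quadratic relation over `E`. -/
lemma build_matrix {K : Type*} [Field K] [CharZero K] (E : Subfield K) (ℓ a b c : K)
    (haE : a ∈ E) (hbE : b ∈ E) (hcE : c ∈ E) (ha : a ≠ 0)
    (hrel : a * ℓ ^ 2 + b * ℓ + c = 0) :
    ∃ h : Matrix (Fin 2) (Fin 2) K, (∀ i j, h i j ∈ E) ∧ h.det ≠ 0 ∧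
      ¬ IsScalarMatrix h ∧ h 1 0 * ℓ + h 1 1 ≠ 0 ∧
      ℓ = (h 0 0 * ℓ + h 0 1) / (h 1 0 * ℓ + h 1 1) := by
  obtain ⟨s, hs4, hsq, hsl⟩ := choose_param b (a * c) (a * ℓ + b)
  have hsE : s ∈ E := by
    rcases hs4 with rfl | rfl | rfl | rfl
    · exact zero_mem E
    · exact one_mem E
    · rw [show (2 : K) = 1 + 1 by norm_num]; exact add_mem (one_mem E) (one_mem E)
    · rw [show (3 : K) = 1 + 1 + 1 by norm_num]
      exact add_mem (add_mem (one_mem E) (one_mem E)) (one_mem E)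
  refine ⟨!![s, -c; a, b + s], ?_, ?_, ?_, ?_, ?_⟩
  · intro i j; fin_cases i <;> fin_cases j <;>
      simp only [Matrix.cons_val', Matrix.cons_val_zero, Matrix.cons_val_one, Matrix.head_cons,
        Matrix.head_fin_const, Matrix.empty_val', Matrix.cons_val_fin_one]
    · exact hsE
    · exact neg_mem hcE
    · exact haE
    · exact add_mem hbE hsE
  · rw [Matrix.det_fin_two_of]
    intro hdet
    apply hsq
    linear_combination hdet
  · rintro ⟨t, ht⟩
    have := congrArg (fun M : Matrix (Fin 2) (Fin 2) K => M 1 0) ht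
    simp [Matrix.one_apply] at this
    exact ha this
  · simpa using fun H => hsl (by linear_combination H)
  · have hden : (!![s, -c; a, b + s] : Matrix (Fin 2) (Fin 2) K) 1 0 * ℓ +
        (!![s, -c; a, b + s] : Matrix (Fin 2) (Fin 2) K) 1 1 ≠ 0 := by
      simpa using fun H => hsl (by linear_combination H)
    rw [eq_div_iff hden]
    have h00 : (!![s, -c; a, b + s] : Matrix (Fin 2) (Fin 2) K) 0 0 = s := rfl
    have h01 : (!![s, -c; a, b + s] : Matrix (Fin 2) (Fin 2) K) 0 1 = -c := rfl
    have h10 : (!![s, -c; a, b + s] : Matrix (Fin 2) (Fin 2) K) 1 0 = a := rfl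
    have h11 : (!![s, -c; a, b + s] : Matrix (Fin 2) (Fin 2) K) 1 1 = b + s := rfl
    rw [h00, h01, h10, h11]
    linear_combination hrel

set_option linter.unusedVariables false in
set_option maxHeartbeats 1000000 in
set_option synthInstance.maxHeartbeats 400000 in
theorem stmt9 {K : Type*} [Field K] [CharZero K] (E L : Subfield K) (hEL : E ≤ L)
    {n : ℕ} (x : Fin n → K) (hx : AlgebraicIndependent L x)
    (ℓ : K) (hℓ : ℓ ∈ L) (hℓE : ℓ ∉ E)
    (g : Matrix (Fin 2) (Fin 2) K)
    (hgE : ∀ i j, g i j ∈ Subfield.closure (↑E ∪ Set.range x))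
    (hgdet : g.det ≠ 0) (hgns : ¬ IsScalarMatrix g)
    (hden : g 1 0 * ℓ + g 1 1 ≠ 0)
    (hact : ℓ = (g 0 0 * ℓ + g 0 1) / (g 1 0 * ℓ + g 1 1)) :
    ∃ h : Matrix (Fin 2) (Fin 2) K, (∀ i j, h i j ∈ E) ∧ h.det ≠ 0 ∧
      ¬ IsScalarMatrix h ∧ h 1 0 * ℓ + h 1 1 ≠ 0 ∧
      ℓ = (h 0 0 * ℓ + h 0 1) / (h 1 0 * ℓ + h 1 1) := by
  classical
  have haF : g 1 0 ∈ Subfield.closure (↑E ∪ Set.range x) := hgE 1 0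
  have hbF : g 1 1 - g 0 0 ∈ Subfield.closure (↑E ∪ Set.range x) :=
    sub_mem (hgE 1 1) (hgE 0 0)
  have hcF : -(g 0 1) ∈ Subfield.closure (↑E ∪ Set.range x) := neg_mem (hgE 0 1)
  have hrel : g 1 0 * ℓ ^ 2 + (g 1 1 - g 0 0) * ℓ + -(g 0 1) = 0 := by
    rw [eq_div_iff hden] at hact
    linear_combination hact
  have habc : ¬(g 1 0 = 0 ∧ g 1 1 - g 0 0 = 0 ∧ -(g 0 1) = 0) := by
    rintro ⟨ha, hb, hc⟩
    apply hgns
    refine ⟨g 0 0, ?_⟩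
    have hb' : g 1 1 = g 0 0 := by linear_combination hb
    have hc' : g 0 1 = 0 := by linear_combination -hc
    ext i j
    fin_cases i <;> fin_cases j <;> simp [Matrix.one_apply, ha, hb', hc']
  obtain ⟨Ra, Sa, hSa, haeq⟩ := mem_closure_ratio E x _ haF
  obtain ⟨Rb, Sb, hSb, hbeq⟩ := mem_closure_ratio E x _ hbF
  obtain ⟨Rc, Sc, hSc, hceq⟩ := mem_closure_ratio E x _ hcF
  obtain ⟨D, hD, hDdef⟩ : ∃ D : K, D ≠ 0 ∧ D = aeval x Sa * aeval x Sb * aeval x Sc :=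
    ⟨_, mul_ne_zero (mul_ne_zero hSa hSb) hSc, rfl⟩
  obtain ⟨Pa, hPa⟩ : ∃ P : MvPolynomial (Fin n) E, aeval x P = g 1 0 * D := by
    refine ⟨Ra * Sb * Sc, ?_⟩
    rw [map_mul, map_mul, haeq, hDdef]
    field_simp
  obtain ⟨Pb, hPb⟩ : ∃ P : MvPolynomial (Fin n) E, aeval x P = (g 1 1 - g 0 0) * D := by
    refine ⟨Sa * Rb * Sc, ?_⟩
    rw [map_mul, map_mul, hbeq, hDdef]
    field_simp
  obtain ⟨Pc, hPc⟩ : ∃ P : MvPolynomial (Fin n) E, aeval x P = -(g 0 1) * D := by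
    refine ⟨Sa * Sb * Rc, ?_⟩
    rw [map_mul, map_mul, hceq, hDdef]
    field_simp
  have hkey : aeval x Pa * ℓ ^ 2 + aeval x Pb * ℓ + aeval x Pc = 0 := by
    rw [hPa, hPb, hPc]
    linear_combination D * hrel
  -- move to polynomials over L
  have haev : ∀ P : MvPolynomial (Fin n) E,
      aeval (R := L) x (MvPolynomial.map (Subfield.inclusion hEL) P) =
        aeval (R := E) x P := by
    intro P
    rw [MvPolynomial.aeval_def, MvPolynomial.aeval_def, MvPolynomial.eval₂_map]
    congr 1
  obtain ⟨ℓ', hℓ'K⟩ : ∃ ℓ' : L, (algebraMap L K) ℓ' = ℓ := ⟨⟨ℓ, hℓ⟩, rfl⟩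
  set Q : MvPolynomial (Fin n) L :=
    C (ℓ' ^ 2) * MvPolynomial.map (Subfield.inclusion hEL) Pa +
    C ℓ' * MvPolynomial.map (Subfield.inclusion hEL) Pb +
    MvPolynomial.map (Subfield.inclusion hEL) Pc with hQ_def
  have hQ0 : aeval (R := L) x Q = 0 := by
    rw [hQ_def, map_add, map_add, map_mul, map_mul, aeval_C, aeval_C, haev, haev, haev,
      map_pow, hℓ'K]
    linear_combination hkey
  have hQ : Q = 0 := hx (by rw [hQ0, map_zero])
  -- find a monomial with a nonzero coefficient triple
  have hone : Pa ≠ 0 ∨ Pb ≠ 0 ∨ Pc ≠ 0 := by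
    by_contra h
    push_neg at h
    apply habc
    refine ⟨?_, ?_, ?_⟩
    · have := hPa; rw [h.1, map_zero] at this
      exact (mul_eq_zero.mp this.symm).resolve_right hD
    · have := hPb; rw [h.2.1, map_zero] at this
      exact (mul_eq_zero.mp this.symm).resolve_right hD
    · have := hPc; rw [h.2.2, map_zero] at this
      exact (mul_eq_zero.mp this.symm).resolve_right hD
  have hm : ∃ m, ¬(MvPolynomial.coeff m Pa = 0 ∧ MvPolynomial.coeff m Pb = 0 ∧
      MvPolynomial.coeff m Pc = 0) := by
    rcases hone with h | h | h
    · obtain ⟨m, hm⟩ := MvPolynomial.ne_zero_iff.mp h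
      exact ⟨m, fun hh => hm hh.1⟩
    · obtain ⟨m, hm⟩ := MvPolynomial.ne_zero_iff.mp h
      exact ⟨m, fun hh => hm hh.2.1⟩
    · obtain ⟨m, hm⟩ := MvPolynomial.ne_zero_iff.mp h
      exact ⟨m, fun hh => hm hh.2.2⟩
  obtain ⟨m, htriple⟩ := hm
  have hcoeffQ : MvPolynomial.coeff m Q = ℓ' ^ 2 * (Subfield.inclusion hEL) (MvPolynomial.coeff m Pa) +
      ℓ' * (Subfield.inclusion hEL) (MvPolynomial.coeff m Pb) +
      (Subfield.inclusion hEL) (MvPolynomial.coeff m Pc) := by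
    rw [hQ_def]
    rw [MvPolynomial.coeff_add, MvPolynomial.coeff_add, MvPolynomial.coeff_C_mul,
      MvPolynomial.coeff_C_mul, MvPolynomial.coeff_map, MvPolynomial.coeff_map,
      MvPolynomial.coeff_map]
  have hKrel : ℓ ^ 2 * ((MvPolynomial.coeff m Pa : E) : K) +
      ℓ * ((MvPolynomial.coeff m Pb : E) : K) + ((MvPolynomial.coeff m Pc : E) : K) = 0 := by
    have h0 : MvPolynomial.coeff m Q = 0 := by rw [hQ]; simp
    rw [hcoeffQ] at h0
    have h2 := congrArg (algebraMap L K) h0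
    have hid : ∀ e : E, (algebraMap L K) ((Subfield.inclusion hEL) e) = (e : K) :=
      fun e => rfl
    rw [map_add, map_add, map_mul, map_mul, map_pow, map_zero, hℓ'K, hid, hid, hid] at h2
    exact h2
  have hamne : ((MvPolynomial.coeff m Pa : E) : K) ≠ 0 := by
    intro ham0
    have hbm0 : ((MvPolynomial.coeff m Pb : E) : K) = 0 := by
      by_contra hbm0
      apply hℓE
      have hℓeq : ℓ = (-((MvPolynomial.coeff m Pc : E) : K)) / ((MvPolynomial.coeff m Pb : E) : K) := by
        rw [eq_div_iff hbm0]
        linear_combination hKrel - ℓ ^ 2 * ham0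
      rw [hℓeq]
      exact div_mem (neg_mem (SetLike.coe_mem _)) (SetLike.coe_mem _)
    have hcm0 : ((MvPolynomial.coeff m Pc : E) : K) = 0 := by
      linear_combination hKrel - ℓ ^ 2 * ham0 - ℓ * hbm0
    exact htriple ⟨by exact_mod_cast ham0, by exact_mod_cast hbm0, by exact_mod_cast hcm0⟩
  exact build_matrix E ℓ ((MvPolynomial.coeff m Pa : E) : K) ((MvPolynomial.coeff m Pb : E) : K)
    ((MvPolynomial.coeff m Pc : E) : K) (SetLike.coe_mem _) (SetLike.coe_mem _)
    (SetLike.coe_mem _) hamne (by linear_combination hKrel)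
end

section
/- Let X be a set with a pregeometry cl, and let dim(A/B) denote dimension relative to cl. Suppose E ⊆ F ⊆ X give rise to two pregeometries cl_E, cl_F with dimensions dim_E, dim_F, such that dim_F(ℓ̄) = dim_E(ℓ̄) for every finite tuple ℓ̄ from a set L (i.e. F is disjoint from L over E). Then for any finite tuple x̄ from X and any A ⊆ L: dim_F(x̄/L) − dim_E(x̄/L) ≤ dim_F(x̄/A) − dim_E(x̄/A). -/
/-- if the relative dimension functions of two pregeometries
`cl_E ≤ cl_F` (given via dimension functions on finite tuples over arbitrary
base sets, satisfying the addition formula, antitonicity in the base, and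
finite character) agree on all finite tuples from a set `L`, then
`dim_F(x̄/L) − dim_E(x̄/L) ≤ dim_F(x̄/A) − dim_E(x̄/A)` for every `A ⊆ L`
(stated additively to avoid truncated subtraction). -/
theorem stmt10 {X : Type*} [DecidableEq X] (L : Set X) (dimE dimF : Finset X → Set X → ℕ)
    -- addition formula for both dimensions
    (haddE : ∀ s t : Finset X, ∀ A : Set X,
      dimE (s ∪ t) A = dimE s (A ∪ ↑t) + dimE t A)
    (haddF : ∀ s t : Finset X, ∀ A : Set X,
      dimF (s ∪ t) A = dimF s (A ∪ ↑t) + dimF t A)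
    -- dimension is antitone in the base set
    (hmonoE : ∀ s : Finset X, ∀ A B : Set X, A ⊆ B → dimE s B ≤ dimE s A)
    (hmonoF : ∀ s : Finset X, ∀ A B : Set X, A ⊆ B → dimF s B ≤ dimF s A)
    -- finite character: the dimension over a set is attained over a finite subset
    (hfinE : ∀ s : Finset X, ∀ A : Set X, ∃ t : Finset X, ↑t ⊆ A ∧
      ∀ B : Set X, ↑t ⊆ B → B ⊆ A → dimE s B = dimE s A)
    (hfinF : ∀ s : Finset X, ∀ A : Set X, ∃ t : Finset X, ↑t ⊆ A ∧
      ∀ B : Set X, ↑t ⊆ B → B ⊆ A → dimF s B = dimF s A)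
    -- `cl_E ⊆ cl_F`, so `dim_F ≤ dim_E`
    (hFE : ∀ s : Finset X, ∀ A : Set X, dimF s A ≤ dimE s A)
    -- geodesical disjointness: the two dimensions agree on tuples from `L`
    (hdisj : ∀ t : Finset X, ↑t ⊆ L → dimF t ∅ = dimE t ∅)
    (s : Finset X) (A : Set X) (hA : A ⊆ L) :
    dimF s L + dimE s A ≤ dimE s L + dimF s A := by
  -- Step 1: for any finite tuple `t ⊆ L` and any base `B ⊆ L`, the two dimensions agree.
  have key : ∀ t : Finset X, ↑t ⊆ L → ∀ B : Set X, B ⊆ L → dimF t B = dimE t B := by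
    intro t htL B hBL
    obtain ⟨b₁, hb₁, hb₁'⟩ := hfinE t B
    obtain ⟨b₂, hb₂, hb₂'⟩ := hfinF t B
    set b := b₁ ∪ b₂ with hb
    have hbB : ↑b ⊆ B := by
      rw [hb, Finset.coe_union]; exact Set.union_subset hb₁ hb₂
    have hE : dimE t ↑b = dimE t B := hb₁' _ (by rw [hb, Finset.coe_union]; exact Set.subset_union_left) hbB
    have hF : dimF t ↑b = dimF t B := hb₂' _ (by rw [hb, Finset.coe_union]; exact Set.subset_union_right) hbB
    have hbL : ↑b ⊆ L := hbB.trans hBL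
    have htbL : ↑(t ∪ b) ⊆ L := by
      rw [Finset.coe_union]; exact Set.union_subset htL hbL
    have e1 := haddE t b ∅
    have e2 := haddF t b ∅
    have e3 := hdisj (t ∪ b) htbL
    have e4 := hdisj b hbL
    rw [Set.empty_union] at e1 e2
    omega
  -- Step 2: pick a finite `t ⊆ L` controlling `dimE s L` and `dimF s L`.
  obtain ⟨t₁, ht₁, ht₁'⟩ := hfinE s L
  obtain ⟨t₂, ht₂, ht₂'⟩ := hfinF s L
  set t := t₁ ∪ t₂ with ht
  have htL : ↑t ⊆ L := by
    rw [ht, Finset.coe_union]; exact Set.union_subset ht₁ ht₂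
  have hAtL : A ∪ ↑t ⊆ L := Set.union_subset hA htL
  have hEL : dimE s (A ∪ ↑t) = dimE s L :=
    ht₁' _ ((by rw [ht, Finset.coe_union]; exact Set.subset_union_left : (↑t₁ : Set X) ⊆ ↑t).trans
      Set.subset_union_right) hAtL
  have hFL : dimF s (A ∪ ↑t) = dimF s L :=
    ht₂' _ ((by rw [ht, Finset.coe_union]; exact Set.subset_union_right : (↑t₂ : Set X) ⊆ ↑t).trans
      Set.subset_union_right) hAtL
  -- Step 3: the two addition formula decompositions of `dim (s ∪ t) A`.
  have hcomm : s ∪ t = t ∪ s := Finset.union_comm s t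
  have eE1 := haddE s t A
  have eE2 := haddE t s A
  have eF1 := haddF s t A
  have eF2 := haddF t s A
  rw [hcomm] at eE1 eF1
  rw [eE2] at eE1
  rw [eF2] at eF1
  -- dimF t A = dimE t A since t ⊆ L, A ⊆ L
  have h1 : dimF t A = dimE t A := key t htL A hA
  have h2 : dimF t (A ∪ ↑s) ≤ dimE t (A ∪ ↑s) := hFE t (A ∪ ↑s)
  omega
end

section
/- Let (K, D, j, j′, j″, j‴) be a j-field, C ⊆ K, and suppose t₁,…,tₙ ∈ K admit j-derivations ∂₁,…,∂ₙ : K → K vanishing on C with ∂ᵢ(tₖ) = δᵢₖ. Then the images d_j(t₁),…,d_j(tₙ) in the universal j-derivation module Ξ(K/C) are K-linearly independent; consequently the jcl-dimension of K over C is at most dim_K Ξ(K/C). -/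
noncomputable section

variable {K : Type*} [Field K]

/-- The generator `dr` in the free `K`-module on the symbols `r ∈ K`. -/
def fgen (r : K) : K →₀ K := Finsupp.single r 1

/-- The relations defining the universal module of `j`-derivations on `K`
vanishing on `C`. -/
def jRels (D : Set K) (j j' j'' j''' : K → K) (C : Set K) : Set (K →₀ K) :=
  {v | (∃ a b : K, v = fgen (a + b) - fgen a - fgen b) ∨
       (∃ a b : K, v = fgen (a * b) - a • fgen b - b • fgen a) ∨
       (∃ z ∈ D, v = fgen (j z) - j' z • fgen z) ∨
       (∃ z ∈ D, v = fgen (j' z) - j'' z • fgen z) ∨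
       (∃ z ∈ D, v = fgen (j'' z) - j''' z • fgen z) ∨
       (∃ c ∈ C, v = fgen c)}

/-- The universal module `Ξ(K/C)` for `j`-derivations vanishing on `C`. -/
def Xi (D : Set K) (j j' j'' j''' : K → K) (C : Set K) :=
  (K →₀ K) ⧸ Submodule.span K (jRels D j j' j'' j''' C)

instance (D : Set K) (j j' j'' j''' : K → K) (C : Set K) :
    AddCommGroup (Xi D j j' j'' j''' C) :=
  Submodule.Quotient.addCommGroup _

instance (D : Set K) (j j' j'' j''' : K → K) (C : Set K) :
    Module K (Xi D j j' j'' j''' C) :=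
  Submodule.Quotient.module _

/-- The universal `j`-derivation `d_j : K → Ξ(K/C)`. -/
def djUniv (D : Set K) (j j' j'' j''' : K → K) (C : Set K) (r : K) :
    Xi D j j' j'' j''' C :=
  Submodule.Quotient.mk (fgen r)

/-- A `j`-derivation from `K` to a `K`-module `M`. -/
def IsJDerivation (D : Set K) (j j' j'' j''' : K → K)
    {M : Type*} [AddCommGroup M] [Module K M] (d : K → M) : Prop :=
  (∀ a b : K, d (a + b) = d a + d b) ∧
  (∀ a b : K, d (a * b) = a • d b + b • d a) ∧
  (∀ z ∈ D, d (j z) = j' z • d z ∧ d (j' z) = j'' z • d z ∧ d (j'' z) = j''' z • d z)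

theorem stmt15 [CharZero K] (D : Set K) (j j' j'' j''' : K → K) (C : Set K)
    {n : ℕ} (t : Fin n → K) (d : Fin n → (K → K))
    (hd : ∀ i, IsJDerivation D j j' j'' j''' (d i))
    (hdC : ∀ i, ∀ c ∈ C, d i c = 0)
    (hdelta : ∀ i k, d i (t k) = if i = k then 1 else 0) :
    LinearIndependent K (fun i : Fin n => djUniv D j j' j'' j''' C (t i)) ∧
    (n : Cardinal) ≤ Module.rank K (Xi D j j' j'' j''' C) := by
  -- For each i, lift d i to a linear functional on Xi.
  have key : ∀ i : Fin n, ∃ ψ : Xi D j j' j'' j''' C →ₗ[K] K,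
      ∀ r : K, ψ (djUniv D j j' j'' j''' C r) = d i r := by
    intro i
    set φ : (K →₀ K) →ₗ[K] K := Finsupp.linearCombination K (d i) with hφ
    have hker : Submodule.span K (jRels D j j' j'' j''' C) ≤ LinearMap.ker φ := by
      rw [Submodule.span_le]
      intro v hv
      simp only [SetLike.mem_coe, LinearMap.mem_ker]
      have htot : ∀ r : K, φ (fgen r) = d i r := by
        intro r
        simp [hφ, fgen, Finsupp.linearCombination_single]
      obtain ⟨hadd, hmul, hD⟩ := hd i
      rcases hv with ⟨a, b, rfl⟩ | ⟨a, b, rfl⟩ | ⟨z, hz, rfl⟩ | ⟨z, hz, rfl⟩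
        | ⟨z, hz, rfl⟩ | ⟨c, hc, rfl⟩
      · simp [map_sub, htot, hadd a b]
      · simp [map_sub, map_smul, htot, hmul a b, smul_eq_mul]
      · simp [map_sub, map_smul, htot, (hD z hz).1]
      · simp [map_sub, map_smul, htot, (hD z hz).2.1]
      · simp [map_sub, map_smul, htot, (hD z hz).2.2]
      · simp [htot, hdC i c hc]
    refine ⟨Submodule.liftQ _ φ hker, fun r => ?_⟩
    show Submodule.liftQ _ φ hker (Submodule.Quotient.mk (fgen r)) = d i r
    erw [Submodule.liftQ_apply]
    simp [hφ, fgen]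
  choose ψ hψ using key
  have hli : LinearIndependent K (fun i : Fin n => djUniv D j j' j'' j''' C (t i)) := by
    rw [Fintype.linearIndependent_iff]
    intro g hg i
    have := congrArg (ψ i) hg
    simp only [map_sum, map_smul, map_zero, hψ, hdelta, smul_eq_mul] at this
    simpa [mul_ite] using this
  refine ⟨hli, ?_⟩
  have := hli.cardinal_lift_le_rank
  simpa using this
end
end
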